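/- (Multipolynomial Bohnenblust–Hille inequality, sufficiency) Let n₁, …, n_m be positive integers and set M = n₁ + ⋯ + n_m. Assuming the polynomial Bohnenblust–Hille inequality for degree M (i.e., there is C_M ≥ 1 such that (Σ_{|β|=M} |c_β(Q)|^{p₀})^{1/p₀} ≤ C_M‖Q‖ for all continuous M-homogeneous scalar polynomials Q on c₀, with p₀ = 2M/(M+1)), then there is a constant C ≥ 1 such that for every continuous (n₁, …, n_m)-homogeneous polynomial P : c₀ × ⋯ × c₀ → 𝕂, (Σ_{|α^{(1)}|=n₁, …, |α^{(m)}|=n_m} |c_{α^{(1)}…α^{(m)}}(P)|^{p₀})^{1/p₀} ≤ C‖P‖. -/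

import Mathlib

/-- Total degree of a finitely supported multi-index. -/
def degOf (α : ℕ →₀ ℕ) : ℕ := α.sum fun _ k => k

/-- Evaluation of the multipolynomial on `c₀ × ⋯ × c₀` with (finitely supported)
monomial coefficient family `c`:
`P(x⁽¹⁾,…,x⁽ᵐ⁾) = Σ_α c_α (x⁽¹⁾)^{α⁽¹⁾} ⋯ (x⁽ᵐ⁾)^{α⁽ᵐ⁾}`. -/
noncomputable def evalMP {m : ℕ} (c : (Fin m → (ℕ →₀ ℕ)) →₀ ℝ)
    (x : Fin m → ℕ → ℝ) : ℝ :=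
  c.sum fun α a => a * ∏ i : Fin m, (α i).prod fun j k => (x i j) ^ k

/-- The sup norm of the multipolynomial with coefficients `c` over the product of
unit balls. -/
noncomputable def mpNorm {m : ℕ} (c : (Fin m → (ℕ →₀ ℕ)) →₀ ℝ) : ℝ :=
  sSup {y : ℝ | ∃ x : Fin m → ℕ → ℝ, (∀ i j, |x i j| ≤ 1) ∧ y = |evalMP c x|}

/-- Interleaving encoding of a family of multi-indices into a single one. -/
noncomputable def enc (m : ℕ) (α : Fin m → (ℕ →₀ ℕ)) : ℕ →₀ ℕ :=
  ∑ i : Fin m, (α i).mapDomain (fun j => i.val + j * m)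

lemma enc_apply (m : ℕ) (α : Fin m → (ℕ →₀ ℕ)) (i : Fin m) (j : ℕ) :
    enc m α (i.val + j * m) = α i j := by
  have hm : 0 < m := i.pos
  rw [enc, Finset.sum_apply', Finset.sum_eq_single i]
  · exact Finsupp.mapDomain_apply
      (fun a b h => Nat.eq_of_mul_eq_mul_right hm (by omega)) _ _
  · intro i' _ hne
    apply Finsupp.mapDomain_notin_range
    rintro ⟨a, ha⟩
    apply hne
    apply Fin.ext
    have ha' : i'.val + a * m = i.val + j * m := ha
    have h1 : (i'.val + a * m) % m = (i.val + j * m) % m := by rw [ha']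
    rwa [Nat.add_mul_mod_self_right, Nat.add_mul_mod_self_right,
      Nat.mod_eq_of_lt i'.isLt, Nat.mod_eq_of_lt i.isLt] at h1
  · intro h; exact absurd (Finset.mem_univ i) h

lemma enc_injective (m : ℕ) : Function.Injective (enc m) := by
  intro α α' h
  funext i
  apply Finsupp.ext
  intro j
  have := congrArg (fun β : ℕ →₀ ℕ => β (i.val + j * m)) h
  simpa [enc_apply] using this

lemma degOf_enc (m : ℕ) (α : Fin m → (ℕ →₀ ℕ)) :
    degOf (enc m α) = ∑ i, degOf (α i) := by
  unfold enc degOf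
  rw [← Finsupp.sum_finset_sum_index (fun _ => rfl) (fun _ _ _ => rfl)]
  exact Finset.sum_congr rfl fun i _ =>
    Finsupp.sum_mapDomain_index (fun _ => rfl) (fun _ _ _ => rfl)

lemma prod_enc (m : ℕ) (α : Fin m → (ℕ →₀ ℕ)) (y : ℕ → ℝ) :
    ((enc m α).prod fun j k => y j ^ k)
      = ∏ i, (α i).prod fun j k => y (i.val + j * m) ^ k := by
  unfold enc
  rw [← Finsupp.prod_finset_sum_index (fun _ => pow_zero _) (fun _ _ _ => pow_add _ _ _)]
  exact Finset.prod_congr rfl fun i _ =>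
    Finsupp.prod_mapDomain_index (fun _ => pow_zero _) (fun _ _ _ => pow_add _ _ _)

lemma evalMP_abs_le {m : ℕ} (c : (Fin m → (ℕ →₀ ℕ)) →₀ ℝ) (x : Fin m → ℕ → ℝ)
    (hx : ∀ i j, |x i j| ≤ 1) : |evalMP c x| ≤ ∑ α ∈ c.support, |c α| := by
  unfold evalMP Finsupp.sum
  refine (Finset.abs_sum_le_sum_abs _ _).trans (Finset.sum_le_sum fun α _ => ?_)
  rw [abs_mul]
  have h1 : |∏ i, (α i).prod fun j k => x i j ^ k| ≤ 1 := by
    rw [Finset.abs_prod]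
    refine Finset.prod_le_one (fun i _ => abs_nonneg _) fun i _ => ?_
    rw [Finsupp.prod, Finset.abs_prod]
    refine Finset.prod_le_one (fun j _ => abs_nonneg _) fun j _ => ?_
    rw [abs_pow]
    exact pow_le_one₀ (abs_nonneg _) (hx i j)
  calc |c α| * |∏ i, (α i).prod fun j k => x i j ^ k|
      ≤ |c α| * 1 := mul_le_mul_of_nonneg_left h1 (abs_nonneg _)
    _ = |c α| := mul_one _

lemma mp_bdd {m : ℕ} (c : (Fin m → (ℕ →₀ ℕ)) →₀ ℝ) :
    BddAbove {y : ℝ | ∃ x : Fin m → ℕ → ℝ, (∀ i j, |x i j| ≤ 1) ∧ y = |evalMP c x|} :=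
  ⟨∑ α ∈ c.support, |c α|, by rintro y ⟨x, hx, rfl⟩; exact evalMP_abs_le c x hx⟩

/-- The encoding as an embedding into functions on `Fin 1`. -/
noncomputable def emb1 (m : ℕ) : (Fin m → (ℕ →₀ ℕ)) ↪ (Fin 1 → (ℕ →₀ ℕ)) :=
  ⟨fun α _ => enc m α, fun α α' h => enc_injective m (congrFun h 0)⟩

lemma evalMP_emb1 {m : ℕ} (c : (Fin m → (ℕ →₀ ℕ)) →₀ ℝ) (y : Fin 1 → ℕ → ℝ) :
    evalMP (Finsupp.embDomain (emb1 m) c) y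
      = evalMP c (fun i j => y 0 (i.val + j * m)) := by
  unfold evalMP
  rw [Finsupp.sum_embDomain]
  refine Finsupp.sum_congr fun α _ => ?_
  congr 1
  have : (∏ i : Fin 1, ((emb1 m) α i).prod fun j k => y i j ^ k)
      = (enc m α).prod fun j k => y 0 j ^ k := by
    rw [Fin.prod_univ_one]
    rfl
  rw [this, prod_enc]

/-- Multipolynomial Bohnenblust–Hille inequality (sufficiency): the polynomial
BH inequality in degree `M = n₁ + ⋯ + n_m` with exponent `p₀ = 2M/(M+1)` implies
the corresponding inequality for `(n₁,…,n_m)`-homogeneous multipolynomials. -/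
theorem stmt16 (m : ℕ) (hm : 0 < m) (n : Fin m → ℕ) (hn : ∀ i, 0 < n i)
    (M : ℕ) (hM : M = ∑ i, n i) (p₀ : ℝ) (hp₀ : p₀ = 2 * M / (M + 1))
    (CM : ℝ) (hCM : 1 ≤ CM)
    (hBH : ∀ c : (Fin 1 → (ℕ →₀ ℕ)) →₀ ℝ, (∀ α ∈ c.support, degOf (α 0) = M) →
      (∑ α ∈ c.support, |c α| ^ p₀) ^ (1 / p₀) ≤ CM * mpNorm c) :
    ∃ C : ℝ, 1 ≤ C ∧
      ∀ c : (Fin m → (ℕ →₀ ℕ)) →₀ ℝ, (∀ α ∈ c.support, ∀ i, degOf (α i) = n i) →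
        (∑ α ∈ c.support, |c α| ^ p₀) ^ (1 / p₀) ≤ C * mpNorm c := by
  refine ⟨CM, hCM, fun c hc => ?_⟩
  set c' := Finsupp.embDomain (emb1 m) c with hc'
  have hdeg : ∀ β ∈ c'.support, degOf (β 0) = M := by
    intro β hβ
    rw [hc', Finsupp.support_embDomain, Finset.mem_map] at hβ
    obtain ⟨α, hα, rfl⟩ := hβ
    show degOf (enc m α) = M
    rw [degOf_enc, hM]
    exact Finset.sum_congr rfl fun i _ => hc α hα i
  have hsum : ∑ β ∈ c'.support, |c' β| ^ p₀ = ∑ α ∈ c.support, |c α| ^ p₀ := by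
    rw [hc', Finsupp.support_embDomain, Finset.sum_map]
    exact Finset.sum_congr rfl fun α _ => by rw [Finsupp.embDomain_apply_self]
  have hnorm : mpNorm c' ≤ mpNorm c := by
    unfold mpNorm
    refine csSup_le ⟨|evalMP c' (fun _ _ => 0)|, ⟨fun _ _ => 0, fun i j => by simp, rfl⟩⟩ ?_
    rintro r ⟨y, hy, rfl⟩
    apply le_csSup (mp_bdd c)
    exact ⟨fun i j => y 0 (i.val + j * m), fun i j => hy 0 _, by rw [hc', evalMP_emb1]⟩
  have h1 := hBH c' hdeg
  rw [hsum] at h1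
  refine h1.trans (mul_le_mul_of_nonneg_left hnorm (by linarith))
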